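/- Let (Xᵢ)_{i∈I} be a family of Banach spaces and X their c₀-sum. Suppose that for all x, y ∈ X and ε > 0 there exist a finite F ⊆ I, closed subspaces Zᵢ ⊆ Xᵢ and aᵢ, bᵢ ∈ Zᵢ (i ∈ F) such that: (1) each closed unit ball B_{Zᵢ} equals {xᵢ ∈ B_{Xᵢ} : ‖xᵢ − mᵢ‖ ≤ 1 for all mᵢ ∈ Mᵢ} for some set Mᵢ ⊆ B_{Xᵢ}; (2) ‖x − (aᵢ)_{i∈F}‖ < ε and ‖y − (bᵢ)_{i∈F}‖ < ε; (3) the closed unit ball of the ℓ∞-sum of (Zᵢ)_{i∈F} satisfies the strong Mankiewicz property. Then every surjective isometry from the closed unit ball of X onto a convex subset of a normed space is affine. -/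

import Mathlib

open scoped ENNReal

noncomputable section

set_option linter.unusedSectionVars false

instance : Fact ((1 : ℝ≥0∞) ≤ ∞) := ⟨le_top⟩

/-- A convex set `K` in a normed space satisfies the strong Mankiewicz property if every
surjective isometry from `K` onto a convex subset of a normed space is affine. -/
def StrongMankiewicz {W : Type*} [NormedAddCommGroup W] [NormedSpace ℝ W]
    (K : Set W) : Prop :=
  ∀ (Y : Type) [NormedAddCommGroup Y] [NormedSpace ℝ Y] (L : Set Y), Convex ℝ L →
    ∀ Δ : W → Y, (∀ a ∈ K, ∀ b ∈ K, ‖Δ a - Δ b‖ = ‖a - b‖) → Δ '' K = L →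
      ∀ a ∈ K, ∀ b ∈ K, ∀ t ∈ Set.Icc (0 : ℝ) 1,
        Δ (t • a + (1 - t) • b) = t • Δ a + (1 - t) • Δ b

/-- An element of the `ℓ∞`-sum lies in the `c₀`-sum if its coordinates vanish at
infinity. -/
def MemC0 {I : Type} {E : I → Type} [∀ i, NormedAddCommGroup (E i)]
    (x : lp E ∞) : Prop :=
  ∀ ε > (0 : ℝ), {i : I | ε ≤ ‖x i‖}.Finite

section Helpers
variable {I : Type} {E : I → Type} [∀ i, NormedAddCommGroup (E i)] [∀ i, NormedSpace ℝ (E i)]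

lemma lpTop_norm_le_one_iff (f : lp E ∞) : ‖f‖ ≤ 1 ↔ ∀ i, ‖f i‖ ≤ 1 :=
  ⟨fun h i => (lp.norm_apply_le_norm ENNReal.top_ne_zero f i).trans h,
   fun h => lp.norm_le_of_forall_le zero_le_one h⟩

lemma lpTop_sub_apply (f g : lp E ∞) (i : I) : (f - g) i = f i - g i := by
  rw [lp.coeFn_sub]; rfl

lemma lpTop_add_apply (f g : lp E ∞) (i : I) : (f + g) i = f i + g i := by
  rw [lp.coeFn_add]; rfl

lemma lpTop_smul_apply (r : ℝ) (f : lp E ∞) (i : I) : (r • f) i = r • f i := by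
  rw [lp.coeFn_smul]; rfl

lemma comb_sub_comb {W : Type*} [NormedAddCommGroup W] [NormedSpace ℝ W]
    (u v u' v' : W) (t : ℝ) :
    (t • u + (1 - t) • v) - (t • u' + (1 - t) • v') = t • (u - u') + (1 - t) • (v - v') := by
  simp only [smul_sub]; abel

lemma norm_comb_le {W : Type*} [NormedAddCommGroup W] [NormedSpace ℝ W]
    (w1 w2 : W) {t : ℝ} (h0 : 0 ≤ t) (h1 : t ≤ 1) :
    ‖t • w1 + (1 - t) • w2‖ ≤ t * ‖w1‖ + (1 - t) * ‖w2‖ := by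
  refine (norm_add_le _ _).trans ?_
  rw [norm_smul, norm_smul, Real.norm_of_nonneg h0, Real.norm_of_nonneg (by linarith)]

lemma memC0_of_finsupp (f : lp E ∞) (F : Finset I) (h : ∀ i ∉ F, f i = 0) : MemC0 f := by
  intro ε hε
  refine F.finite_toSet.subset fun i hi => ?_
  by_contra hiF
  rw [Set.mem_setOf_eq, h i hiF, norm_zero] at hi
  linarith

lemma memC0_comb {a b : lp E ∞} (ha : MemC0 a) (hb : MemC0 b) {t : ℝ}
    (ht0 : 0 ≤ t) (ht1 : t ≤ 1) : MemC0 (t • a + (1 - t) • b) := by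
  intro ε hε
  refine ((ha ε hε).union (hb ε hε)).subset fun i hi => ?_
  rw [Set.mem_setOf_eq] at hi
  by_contra hcon
  simp only [Set.mem_union, Set.mem_setOf_eq, not_or, not_le] at hcon
  obtain ⟨h1, h2⟩ := hcon
  have happ : (t • a + (1 - t) • b) i = t • a i + (1 - t) • b i := by
    rw [lpTop_add_apply, lpTop_smul_apply, lpTop_smul_apply]
  rw [happ] at hi
  have hn := (norm_comb_le (a i) (b i) ht0 ht1)
  rcases ht0.lt_or_eq with h0 | h0
  · nlinarith [mul_le_mul_of_nonneg_left h2.le (by linarith : (0:ℝ) ≤ 1 - t),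
      mul_pos h0 (sub_pos.mpr h1)]
  · rw [← h0] at hi
    rw [zero_smul, sub_zero, one_smul, zero_add] at hi
    linarith

variable [DecidableEq I]

lemma lpTop_norm_single_le {i : I} {c : E i} (hc : ‖c‖ ≤ 1) :
    ‖lp.single (∞ : ℝ≥0∞) i c‖ ≤ 1 := by
  refine lp.norm_le_of_forall_le zero_le_one fun j => ?_
  by_cases hj : j = i
  · subst hj; rw [lp.single_apply_self]; exact hc
  · rw [lp.single_apply_ne _ _ _ hj, norm_zero]; exact zero_le_one

lemma memC0_single (i : I) (c : E i) : MemC0 (lp.single (∞ : ℝ≥0∞) i c) := by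
  refine memC0_of_finsupp _ {i} fun j hj => ?_
  exact lp.single_apply_ne _ _ _ (by simpa using hj)

/-- For `z` in the unit ball, the distance to a single-coordinate element is controlled
by the corresponding coordinate. -/
lemma lpTop_sub_single_le {z : lp E ∞} (hz : ‖z‖ ≤ 1) {i : I} {c : E i} (hc : ‖c‖ ≤ 1) :
    ‖z - lp.single (∞ : ℝ≥0∞) i c‖ ≤ 1 ↔ ‖z i - c‖ ≤ 1 := by
  constructor
  · intro h
    have := (lpTop_norm_le_one_iff _).mp h i
    rwa [lpTop_sub_apply, lp.single_apply_self] at this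
  · intro h
    refine (lpTop_norm_le_one_iff _).mpr fun j => ?_
    rw [lpTop_sub_apply]
    by_cases hj : j = i
    · subst hj; rwa [lp.single_apply_self]
    · rw [lp.single_apply_ne _ _ _ hj, sub_zero]
      exact (lpTop_norm_le_one_iff _).mp hz j

end Helpers

theorem stmt10 {I : Type} {E : I → Type}
    [∀ i, NormedAddCommGroup (E i)] [∀ i, NormedSpace ℝ (E i)] [∀ i, CompleteSpace (E i)]
    (hyp : ∀ x : lp E ∞, MemC0 x → ∀ y : lp E ∞, MemC0 y → ∀ ε > (0 : ℝ),
      ∃ (F : Finset I) (Z : ∀ i, Submodule ℝ (E i)) (a b : lp E ∞),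
        (∀ i, IsClosed (Z i : Set (E i))) ∧
        (∀ i, a i ∈ Z i) ∧ (∀ i, b i ∈ Z i) ∧
        (∀ i ∉ F, a i = 0) ∧ (∀ i ∉ F, b i = 0) ∧
        (∀ i ∈ F, ∃ M : Set (E i), (∀ m ∈ M, ‖m‖ ≤ 1) ∧
          {z : E i | z ∈ Z i ∧ ‖z‖ ≤ 1} =
            {z : E i | ‖z‖ ≤ 1 ∧ ∀ m ∈ M, ‖z - m‖ ≤ 1}) ∧
        ‖x - a‖ < ε ∧ ‖y - b‖ < ε ∧
        StrongMankiewicz {z : lp E ∞ | ‖z‖ ≤ 1 ∧ (∀ i, z i ∈ Z i) ∧ ∀ i ∉ F, z i = 0}) :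
    ∀ (Y : Type) [NormedAddCommGroup Y] [NormedSpace ℝ Y] (L : Set Y), Convex ℝ L →
      ∀ Δ : lp E ∞ → Y,
        (∀ a ∈ {z : lp E ∞ | MemC0 z ∧ ‖z‖ ≤ 1},
          ∀ b ∈ {z : lp E ∞ | MemC0 z ∧ ‖z‖ ≤ 1}, ‖Δ a - Δ b‖ = ‖a - b‖) →
        Δ '' {z : lp E ∞ | MemC0 z ∧ ‖z‖ ≤ 1} = L →
        ∀ a ∈ {z : lp E ∞ | MemC0 z ∧ ‖z‖ ≤ 1},
          ∀ b ∈ {z : lp E ∞ | MemC0 z ∧ ‖z‖ ≤ 1}, ∀ t ∈ Set.Icc (0 : ℝ) 1,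
            Δ (t • a + (1 - t) • b) = t • Δ a + (1 - t) • Δ b := by
  classical
  intro Y _ _ L hL Δ hiso hsurj a ha b hb t ht
  obtain ⟨ht0, ht1⟩ := ht
  set B : Set (lp E ∞) := {z : lp E ∞ | MemC0 z ∧ ‖z‖ ≤ 1} with hB
  -- it suffices to bound the defect by `4 * ε` for every `ε > 0`
  suffices key : ∀ ε > (0:ℝ),
      ‖Δ (t • a + (1 - t) • b) - (t • Δ a + (1 - t) • Δ b)‖ ≤ 4 * ε by
    have h0 : ‖Δ (t • a + (1 - t) • b) - (t • Δ a + (1 - t) • Δ b)‖ ≤ 0 := by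
      refine le_of_forall_pos_le_add fun ε hε => ?_
      have := key (ε / 4) (by linarith)
      linarith
    have := norm_eq_zero.mp (le_antisymm h0 (norm_nonneg _))
    exact sub_eq_zero.mp this
  intro ε hε
  obtain ⟨F, Z, a', b', hZcl, haZ, hbZ, haF, hbF, hMex, haa, hbb, hSM⟩ :=
    hyp a ha.1 b hb.1 ε hε
  choose M hM1 hM2 using hMex
  set K : Set (lp E ∞) :=
    {z : lp E ∞ | ‖z‖ ≤ 1 ∧ (∀ i, z i ∈ Z i) ∧ ∀ i ∉ F, z i = 0} with hKdef
  -- the family of ball centers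
  set Mh : Set (lp E ∞) :=
    {w : lp E ∞ | ∃ (i : I) (c : E i), w = lp.single (∞ : ℝ≥0∞) i c ∧ ‖c‖ ≤ 1 ∧
      ((∃ h : i ∈ F, c ∈ M i h) ∨ i ∉ F)} with hMhdef
  have hMhB : Mh ⊆ B := by
    rintro w ⟨i, c, rfl, hc, -⟩
    exact ⟨memC0_single i c, lpTop_norm_single_le hc⟩
  have hKB : K ⊆ B := by
    rintro z ⟨hz1, -, hz3⟩
    exact ⟨memC0_of_finsupp z F hz3, hz1⟩
  -- characterisation of K by ball conditions
  have hK1 : ∀ z ∈ K, ∀ m ∈ Mh, ‖z - m‖ ≤ 1 := by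
    rintro z ⟨hz1, hz2, hz3⟩ w ⟨i, c, rfl, hc, hcase⟩
    refine (lpTop_sub_single_le hz1 hc).mpr ?_
    rcases hcase with ⟨hiF, hcM⟩ | hiF
    · have hzi : z i ∈ {v : E i | v ∈ Z i ∧ ‖v‖ ≤ 1} :=
        ⟨hz2 i, (lpTop_norm_le_one_iff z).mp hz1 i⟩
      rw [hM2 i hiF] at hzi
      exact hzi.2 c hcM
    · rw [hz3 i hiF, zero_sub, norm_neg]; exact hc
  have hK2 : ∀ z ∈ B, (∀ m ∈ Mh, ‖z - m‖ ≤ 1) → z ∈ K := by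
    rintro z ⟨hz0, hz1⟩ hball
    have hout : ∀ i ∉ F, z i = 0 := by
      intro i hiF
      by_contra hne
      have hzi : (0:ℝ) < ‖z i‖ := norm_pos_iff.mpr hne
      set c : E i := -(‖z i‖⁻¹ • z i) with hcdef
      have hcn : ‖c‖ = 1 := by
        rw [hcdef, norm_neg, norm_smul, norm_inv, norm_norm, inv_mul_cancel₀ hzi.ne']
      have hmem : lp.single (∞ : ℝ≥0∞) i c ∈ Mh := ⟨i, c, rfl, hcn.le, Or.inr hiF⟩
      have h1 : ‖z i - c‖ ≤ 1 :=
        (lpTop_sub_single_le hz1 hcn.le).mp (hball _ hmem)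
      have h2 : z i - c = (1 + ‖z i‖⁻¹) • z i := by
        rw [hcdef, sub_neg_eq_add, add_smul, one_smul]
      rw [h2, norm_smul, Real.norm_of_nonneg (by positivity), add_mul, one_mul,
        inv_mul_cancel₀ hzi.ne'] at h1
      linarith
    refine ⟨hz1, fun i => ?_, hout⟩
    by_cases hiF : i ∈ F
    · have hzi : z i ∈ {v : E i | ‖v‖ ≤ 1 ∧ ∀ m ∈ M i hiF, ‖v - m‖ ≤ 1} := by
        refine ⟨(lpTop_norm_le_one_iff z).mp hz1 i, fun m hm => ?_⟩
        have hmn : ‖m‖ ≤ 1 := hM1 i hiF m hm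
        have hmem : lp.single (∞ : ℝ≥0∞) i m ∈ Mh := ⟨i, m, rfl, hmn, Or.inl ⟨hiF, hm⟩⟩
        exact (lpTop_sub_single_le hz1 hmn).mp (hball _ hmem)
      rw [← hM2 i hiF] at hzi
      exact hzi.1
    · rw [hout i hiF]; exact (Z i).zero_mem
  -- the image of K is convex
  set L' : Set Y := {q : Y | q ∈ L ∧ ∀ m ∈ Mh, ‖q - Δ m‖ ≤ 1} with hL'def
  have hL'conv : Convex ℝ L' := by
    rintro q1 ⟨hq1L, hq1⟩ q2 ⟨hq2L, hq2⟩ s u hs hu hsu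
    refine ⟨hL hq1L hq2L hs hu hsu, fun m hm => ?_⟩
    have hΔ : s • Δ m + u • Δ m = Δ m := by rw [← add_smul, hsu, one_smul]
    have hsplit : s • q1 + u • q2 - Δ m = s • (q1 - Δ m) + u • (q2 - Δ m) := by
      calc s • q1 + u • q2 - Δ m
          = s • q1 + u • q2 - (s • Δ m + u • Δ m) := by rw [hΔ]
        _ = s • (q1 - Δ m) + u • (q2 - Δ m) := by simp only [smul_sub]; abel
    rw [hsplit]
    calc ‖s • (q1 - Δ m) + u • (q2 - Δ m)‖
        ≤ s * ‖q1 - Δ m‖ + u * ‖q2 - Δ m‖ := by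
          refine (norm_add_le _ _).trans ?_
          rw [norm_smul, norm_smul, Real.norm_of_nonneg hs, Real.norm_of_nonneg hu]
      _ ≤ s * 1 + u * 1 :=
          add_le_add (mul_le_mul_of_nonneg_left (hq1 m hm) hs)
            (mul_le_mul_of_nonneg_left (hq2 m hm) hu)
      _ = 1 := by linarith
  have himg : Δ '' K = L' := by
    apply Set.Subset.antisymm
    · rintro - ⟨p, hp, rfl⟩
      refine ⟨hsurj ▸ ⟨p, hKB hp, rfl⟩, fun m hm => ?_⟩
      rw [hiso p (hKB hp) m (hMhB hm)]
      exact hK1 p hp m hm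
    · rintro q ⟨hqL, hq⟩
      rw [← hsurj] at hqL
      obtain ⟨p, hpB, rfl⟩ := hqL
      refine ⟨p, hK2 p hpB fun m hm => ?_, rfl⟩
      rw [← hiso p hpB m (hMhB hm)]
      exact hq m hm
  -- apply the strong Mankiewicz property on K
  have haff := hSM Y L' hL'conv Δ
    (fun u hu v hv => hiso u (hKB hu) v (hKB hv)) himg
  -- build approximations inside K
  have hnorm_a' : ‖a'‖ ≤ 1 + ε := by
    have h1 : ‖a'‖ - ‖a‖ ≤ ‖a' - a‖ := norm_sub_norm_le a' a
    have h2 : ‖a' - a‖ = ‖a - a'‖ := norm_sub_rev _ _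
    have h3 : ‖a‖ ≤ 1 := ha.2
    linarith
  have hnorm_b' : ‖b'‖ ≤ 1 + ε := by
    have h1 : ‖b'‖ - ‖b‖ ≤ ‖b' - b‖ := norm_sub_norm_le b' b
    have h2 : ‖b' - b‖ = ‖b - b'‖ := norm_sub_rev _ _
    have h3 : ‖b‖ ≤ 1 := hb.2
    linarith
  have hεpos : (0:ℝ) < 1 + ε := by linarith
  set p : lp E ∞ := (1 + ε)⁻¹ • a' with hpdef
  set q : lp E ∞ := (1 + ε)⁻¹ • b' with hqdef
  have hinK : ∀ (c : lp E ∞), (∀ i, c i ∈ Z i) → (∀ i ∉ F, c i = 0) → ‖c‖ ≤ 1 + ε →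
      ((1 + ε)⁻¹ • c) ∈ K := by
    intro c hcZ hcF hcn
    refine ⟨?_, fun i => ?_, fun i hi => ?_⟩
    · rw [norm_smul, norm_inv, Real.norm_of_nonneg hεpos.le]
      rw [inv_mul_le_iff₀ hεpos, mul_one]
      exact hcn
    · rw [lpTop_smul_apply]; exact (Z i).smul_mem _ (hcZ i)
    · rw [lpTop_smul_apply, hcF i hi, smul_zero]
  have hpK : p ∈ K := hinK a' haZ haF hnorm_a'
  have hqK : q ∈ K := hinK b' hbZ hbF hnorm_b'
  have happrox : ∀ (x c : lp E ∞), ‖x - c‖ < ε → ‖c‖ ≤ 1 + ε →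
      ‖x - (1 + ε)⁻¹ • c‖ ≤ 2 * ε := by
    intro x c hxc hcn
    have hsplit : x - (1 + ε)⁻¹ • c = (x - c) + (1 - (1 + ε)⁻¹) • c := by
      rw [sub_smul, one_smul]; abel
    have hinv0 : (0:ℝ) ≤ (1 + ε)⁻¹ := inv_nonneg.mpr hεpos.le
    have hic : (1 + ε)⁻¹ * (1 + ε) = 1 := inv_mul_cancel₀ hεpos.ne'
    have hcoef : (0:ℝ) ≤ 1 - (1 + ε)⁻¹ := by nlinarith
    have hcoef2 : (1 - (1 + ε)⁻¹) * (1 + ε) = ε := by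
      field_simp
      ring
    calc ‖x - (1 + ε)⁻¹ • c‖ = ‖(x - c) + (1 - (1 + ε)⁻¹) • c‖ := by rw [hsplit]
      _ ≤ ‖x - c‖ + ‖(1 - (1 + ε)⁻¹) • c‖ := norm_add_le _ _
      _ ≤ ε + (1 - (1 + ε)⁻¹) * (1 + ε) := by
          rw [norm_smul, Real.norm_of_nonneg hcoef]
          exact add_le_add hxc.le (mul_le_mul_of_nonneg_left hcn hcoef)
      _ = ε + ε := by rw [hcoef2]
      _ = 2 * ε := by ring
  have hap : ‖a - p‖ ≤ 2 * ε := happrox a a' haa hnorm_a'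
  have hbq : ‖b - q‖ ≤ 2 * ε := happrox b b' hbb hnorm_b'
  -- the affine identity on K
  have haffpq : Δ (t • p + (1 - t) • q) = t • Δ p + (1 - t) • Δ q :=
    haff p hpK q hqK t ⟨ht0, ht1⟩
  -- memberships of the combinations
  have hcombZ : ∀ i, (t • a' + (1 - t) • b') i ∈ Z i := by
    intro i
    rw [lpTop_add_apply, lpTop_smul_apply, lpTop_smul_apply]
    exact (Z i).add_mem ((Z i).smul_mem _ (haZ i)) ((Z i).smul_mem _ (hbZ i))
  have hcombF : ∀ i ∉ F, (t • a' + (1 - t) • b') i = 0 := by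
    intro i hi
    rw [lpTop_add_apply, lpTop_smul_apply, lpTop_smul_apply, haF i hi, hbF i hi,
      smul_zero, smul_zero, add_zero]
  have hcombn : ‖t • a' + (1 - t) • b'‖ ≤ 1 + ε := by
    calc ‖t • a' + (1 - t) • b'‖ ≤ t * ‖a'‖ + (1 - t) * ‖b'‖ := norm_comb_le _ _ ht0 ht1
      _ ≤ t * (1 + ε) + (1 - t) * (1 + ε) :=
          add_le_add (mul_le_mul_of_nonneg_left hnorm_a' ht0)
            (mul_le_mul_of_nonneg_left hnorm_b' (by linarith))
      _ = 1 + ε := by ring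
  have heq : t • p + (1 - t) • q = (1 + ε)⁻¹ • (t • a' + (1 - t) • b') := by
    rw [hpdef, hqdef, smul_add, smul_comm ((1:ℝ) + ε)⁻¹ t, smul_comm ((1:ℝ) + ε)⁻¹ (1 - t)]
  have hcombK : (t • p + (1 - t) • q) ∈ K := by
    rw [heq]; exact hinK _ hcombZ hcombF hcombn
  have hcombB : (t • a + (1 - t) • b) ∈ B := by
    refine ⟨memC0_comb ha.1 hb.1 ht0 ht1, ?_⟩
    calc ‖t • a + (1 - t) • b‖ ≤ t * ‖a‖ + (1 - t) * ‖b‖ := norm_comb_le _ _ ht0 ht1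
      _ ≤ t * 1 + (1 - t) * 1 :=
          add_le_add (mul_le_mul_of_nonneg_left ha.2 ht0)
            (mul_le_mul_of_nonneg_left hb.2 (by linarith))
      _ = 1 := by ring
  -- final estimate
  have tri : ∀ x y z : Y, ‖x - z‖ ≤ ‖x - y‖ + ‖y - z‖ := fun x y z => by
    simpa [dist_eq_norm] using dist_triangle x y z
  have h1 : ‖Δ (t • a + (1 - t) • b) - Δ (t • p + (1 - t) • q)‖ ≤ 2 * ε := by
    rw [hiso _ hcombB _ (hKB hcombK), comb_sub_comb]
    calc ‖t • (a - p) + (1 - t) • (b - q)‖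
        ≤ t * ‖a - p‖ + (1 - t) * ‖b - q‖ := norm_comb_le _ _ ht0 ht1
      _ ≤ t * (2 * ε) + (1 - t) * (2 * ε) :=
          add_le_add (mul_le_mul_of_nonneg_left hap ht0)
            (mul_le_mul_of_nonneg_left hbq (by linarith))
      _ = 2 * ε := by ring
  have h2 : ‖Δ (t • p + (1 - t) • q) - (t • Δ a + (1 - t) • Δ b)‖ ≤ 2 * ε := by
    rw [haffpq, comb_sub_comb]
    have hda : ‖Δ p - Δ a‖ ≤ 2 * ε := by
      rw [hiso p (hKB hpK) a ha, norm_sub_rev]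
      exact hap
    have hdb : ‖Δ q - Δ b‖ ≤ 2 * ε := by
      rw [hiso q (hKB hqK) b hb, norm_sub_rev]
      exact hbq
    calc ‖t • (Δ p - Δ a) + (1 - t) • (Δ q - Δ b)‖
        ≤ t * ‖Δ p - Δ a‖ + (1 - t) * ‖Δ q - Δ b‖ := norm_comb_le _ _ ht0 ht1
      _ ≤ t * (2 * ε) + (1 - t) * (2 * ε) :=
          add_le_add (mul_le_mul_of_nonneg_left hda ht0)
            (mul_le_mul_of_nonneg_left hdb (by linarith))
      _ = 2 * ε := by ring
  calc ‖Δ (t • a + (1 - t) • b) - (t • Δ a + (1 - t) • Δ b)‖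
      ≤ ‖Δ (t • a + (1 - t) • b) - Δ (t • p + (1 - t) • q)‖ +
        ‖Δ (t • p + (1 - t) • q) - (t • Δ a + (1 - t) • Δ b)‖ := tri _ _ _
    _ ≤ 2 * ε + 2 * ε := add_le_add h1 h2
    _ = 4 * ε := by ring

end
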